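/- arXiv:1703.06518 — 2 statements merged into one kernel-verified Lean document; each statement's English description precedes it below -/
import Mathlib

section
/- Let P = (1/2)P₁ + (1/2)P₂ where P₁ is uniform on [0, 1/2] and P₂ is the uniform discrete measure on {2/3, 5/6, 1}. Then lim_{n→∞} n² V_n(P) = 1/96. In particular the quantization dimension of P exists and equals 1. -/
open MeasureTheory Set Filter Real
open scoped ENNReal

/-- Distortion error of a finite set of quantizers `γ` for the measure `P`. -/
noncomputable def distortion (P : Measure ℝ) (γ : Finset ℝ) : ℝ :=
  ∫ x, (⨅ c : γ, (x - (c : ℝ)) ^ 2) ∂P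

/-- The `n`-th quantization error of `P`. -/
noncomputable def quantErr (P : Measure ℝ) (n : ℕ) : ℝ :=
  sInf {v : ℝ | ∃ γ : Finset ℝ, γ.Nonempty ∧ γ.card ≤ n ∧ v = distortion P γ}

/-- `γ` is an optimal set of `n`-means for `P`. -/
def IsOptimalSet (P : Measure ℝ) (n : ℕ) (γ : Finset ℝ) : Prop :=
  γ.Nonempty ∧ γ.card ≤ n ∧ distortion P γ = quantErr P n

/-- Uniform distribution on `[a, b]`. -/
noncomputable def unif (a b : ℝ) : Measure ℝ :=
  (ENNReal.ofReal (b - a))⁻¹ • (volume.restrict (Icc a b))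

/-- The uniform discrete measure on `{2/3, 5/6, 1}`. -/
noncomputable def discD : Measure ℝ :=
  (3 : ℝ≥0∞)⁻¹ • (Measure.dirac (2/3) + Measure.dirac (5/6) + Measure.dirac 1)

/-- Mixture `(1/2)P₁ + (1/2)P₂`. -/
noncomputable def mix (P₁ P₂ : Measure ℝ) : Measure ℝ :=
  (2 : ℝ≥0∞)⁻¹ • P₁ + (2 : ℝ≥0∞)⁻¹ • P₂


noncomputable def Ffun (γ : Finset ℝ) (x : ℝ) : ℝ := ⨅ c : γ, (x - (c : ℝ)) ^ 2

lemma Ffun_eq_inf' {γ : Finset ℝ} (h : γ.Nonempty) (x : ℝ) :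
    Ffun γ x = γ.inf' h (fun c => (x - c) ^ 2) := by
  rw [Finset.inf'_eq_csInf_image, Ffun, iInf, Set.image_eq_range]
  rfl

lemma Ffun_nonneg (γ : Finset ℝ) (x : ℝ) : 0 ≤ Ffun γ x :=
  Real.iInf_nonneg fun c => sq_nonneg _

lemma Ffun_le {γ : Finset ℝ} {c : ℝ} (hc : c ∈ γ) (x : ℝ) : Ffun γ x ≤ (x - c) ^ 2 := by
  rw [Ffun_eq_inf' ⟨c, hc⟩]
  exact Finset.inf'_le _ hc

lemma Ffun_exists_min {γ : Finset ℝ} (h : γ.Nonempty) (x : ℝ) :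
    ∃ c ∈ γ, Ffun γ x = (x - c) ^ 2 := by
  obtain ⟨c, hc, hx⟩ := Finset.exists_mem_eq_inf' h (fun c => (x - c) ^ 2)
  exact ⟨c, hc, (Ffun_eq_inf' h x).trans hx⟩

lemma Ffun_continuous {γ : Finset ℝ} (h : γ.Nonempty) : Continuous (Ffun γ) := by
  have : Continuous (fun x => γ.inf' h (fun c => (x - c) ^ 2)) := by
    apply Continuous.finset_inf'_apply h
    exact fun c _ => by continuity
  exact this.congr fun x => (Ffun_eq_inf' h x).symm

lemma integrable_dirac' {f : ℝ → ℝ} (hf : Continuous f) (a : ℝ) :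
    Integrable f (Measure.dirac a) := by
  have : (fun _ : ℝ => f a) =ᵐ[Measure.dirac a] f := by
    rw [MeasureTheory.ae_dirac_eq]
    exact Filter.eventually_pure.mpr rfl
  exact (integrable_const (f a)).congr this

lemma distortion_eq (P : Measure ℝ) (hP : P = mix (unif 0 (1/2)) discD)
    {γ : Finset ℝ} (h : γ.Nonempty) :
    distortion P γ = (∫ x in Icc (0:ℝ) (1/2), Ffun γ x) +
      (Ffun γ (2/3) + Ffun γ (5/6) + Ffun γ 1) / 6 := by
  have hc : Continuous (Ffun γ) := Ffun_continuous h
  have hIcc : Integrable (Ffun γ) (volume.restrict (Icc (0:ℝ) (1/2))) :=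
    hc.integrableOn_Icc
  have hunif : Integrable (Ffun γ) (unif 0 (1/2)) := by
    rw [unif]
    exact hIcc.smul_measure (by simp)
  have hdd : Integrable (Ffun γ) (Measure.dirac (2/3) + Measure.dirac (5/6)) :=
    (integrable_add_measure).mpr ⟨integrable_dirac' hc _, integrable_dirac' hc _⟩
  have hdisc : Integrable (Ffun γ) discD := by
    rw [discD]
    exact ((integrable_add_measure).mpr ⟨hdd, integrable_dirac' hc _⟩).smul_measure (by simp)
  have key : distortion P γ = ∫ x, Ffun γ x ∂P := rfl
  rw [key, hP, mix, integral_add_measure (hunif.smul_measure (by simp))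
      (hdisc.smul_measure (by simp)), integral_smul_measure, integral_smul_measure]
  rw [unif, integral_smul_measure, discD, integral_smul_measure,
      integral_add_measure hdd (integrable_dirac' hc _),
      integral_add_measure (integrable_dirac' hc _) (integrable_dirac' hc _),
      integral_dirac, integral_dirac, integral_dirac]
  have h1 : ((2:ℝ≥0∞)⁻¹).toReal = 1/2 := by simp
  have h2 : ((3:ℝ≥0∞)⁻¹).toReal = 1/3 := by simp
  have h3 : ((ENNReal.ofReal ((1:ℝ)/2 - 0))⁻¹).toReal = 2 := by
    rw [ENNReal.toReal_inv]; norm_num [ENNReal.toReal_ofReal]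
  rw [h1, h2, h3]
  simp only [smul_eq_mul]
  ring

lemma lower_core {γ : Finset ℝ} (h : γ.Nonempty) {n : ℕ} (hn : 1 ≤ n) (hcard : γ.card ≤ n) :
    1 / (96 * (n:ℝ)^2) ≤ ∫ x in Icc (0:ℝ) (1/2), Ffun γ x := by
  have hc : Continuous (Ffun γ) := Ffun_continuous h
  have hnR : (0:ℝ) < n := by exact_mod_cast hn
  set μ := volume.restrict (Icc (0:ℝ) (1/2)) with hμ
  set r : ℝ := 1 / (4 * n) with hr
  have hrpos : 0 < r := by positivity
  set T : ℝ := r ^ 2 with hT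
  have hTpos : 0 < T := by positivity
  -- the distribution-function lower bound
  have claim : ∀ t : ℝ, ENNReal.ofReal (1/2 - 2*n*Real.sqrt t) ≤ μ {x | t < Ffun γ x} := by
    intro t
    have hsub : {x | Ffun γ x ≤ t} ∩ Icc (0:ℝ) (1/2) ⊆
        ⋃ c ∈ γ, Icc (c - Real.sqrt t) (c + Real.sqrt t) := by
      rintro x ⟨hx, -⟩
      obtain ⟨c, hc', hmin⟩ := Ffun_exists_min h x
      have hxc : (x - c) ^ 2 ≤ t := by rw [← hmin]; exact hx
      have h1 : |x - c| ≤ Real.sqrt t := by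
        have := Real.sqrt_le_sqrt hxc
        rwa [Real.sqrt_sq_eq_abs] at this
      obtain ⟨h2, h3⟩ := abs_le.mp h1
      exact Set.mem_biUnion hc' ⟨by linarith, by linarith⟩
    have hcov : volume ({x | Ffun γ x ≤ t} ∩ Icc (0:ℝ) (1/2)) ≤
        ENNReal.ofReal (2*n*Real.sqrt t) := by
      refine le_trans (measure_mono hsub) ?_
      refine le_trans (measure_biUnion_finset_le γ _) ?_
      have hv : ∀ c : ℝ, volume (Icc (c - Real.sqrt t) (c + Real.sqrt t)) =
          ENNReal.ofReal (2 * Real.sqrt t) := by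
        intro c; rw [Real.volume_Icc]; congr 1; ring
      simp only [hv, Finset.sum_const, nsmul_eq_mul]
      calc (γ.card : ℝ≥0∞) * ENNReal.ofReal (2 * Real.sqrt t)
          ≤ (n : ℝ≥0∞) * ENNReal.ofReal (2 * Real.sqrt t) := by
            gcongr
        _ = ENNReal.ofReal (2*n*Real.sqrt t) := by
            rw [← ENNReal.ofReal_natCast n, ← ENNReal.ofReal_mul (by positivity)]
            ring_nf
    have hmeasset : MeasurableSet {x : ℝ | t < Ffun γ x} :=
      measurableSet_lt measurable_const hc.measurable
    have hres : μ {x | t < Ffun γ x} = volume ({x | t < Ffun γ x} ∩ Icc (0:ℝ) (1/2)) := by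
      rw [hμ, Measure.restrict_apply hmeasset]
    have hsplit : ENNReal.ofReal (1/2 : ℝ) ≤
        volume ({x | t < Ffun γ x} ∩ Icc (0:ℝ) (1/2)) +
        volume ({x | Ffun γ x ≤ t} ∩ Icc (0:ℝ) (1/2)) := by
      have hIcc : Icc (0:ℝ) (1/2) ⊆
          ({x | t < Ffun γ x} ∩ Icc (0:ℝ) (1/2)) ∪ ({x | Ffun γ x ≤ t} ∩ Icc (0:ℝ) (1/2)) := by
        intro x hx
        rcases lt_or_ge t (Ffun γ x) with h' | h'
        · exact Or.inl ⟨h', hx⟩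
        · exact Or.inr ⟨h', hx⟩
      calc ENNReal.ofReal (1/2:ℝ) = volume (Icc (0:ℝ) (1/2)) := by
            rw [Real.volume_Icc]; norm_num
        _ ≤ _ := le_trans (measure_mono hIcc) (measure_union_le _ _)
    rw [hres]
    have := tsub_le_iff_right.mpr (le_trans hsplit (add_le_add le_rfl hcov))
    refine le_trans ?_ this
    rw [← ENNReal.ofReal_sub _ (by positivity)]
  -- layer cake
  have haemeas : AEMeasurable (Ffun γ) μ := hc.measurable.aemeasurable
  have key := lintegral_eq_lintegral_meas_lt μ
    (Eventually.of_forall (fun x => Ffun_nonneg γ x)) haemeas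
  have step1 : ∫⁻ t in Ioo (0:ℝ) T, ENNReal.ofReal (1/2 - 2*n*Real.sqrt t) ≤
      ∫⁻ x, ENNReal.ofReal (Ffun γ x) ∂μ := by
    rw [key]
    refine le_trans (lintegral_mono (fun t => claim t)) ?_
    exact lintegral_mono_set Ioo_subset_Ioi_self
  -- compute the explicit integral
  have hg_int : IntegrableOn (fun t : ℝ => 1/2 - 2*n*Real.sqrt t) (Ioo 0 T) volume := by
    exact (continuous_const.sub (continuous_const.mul Real.continuous_sqrt)).integrableOn_Icc.mono_set Ioo_subset_Icc_self
  have hg_nn : 0 ≤ᵐ[volume.restrict (Ioo (0:ℝ) T)] (fun t : ℝ => 1/2 - 2*n*Real.sqrt t) := by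
    refine (ae_restrict_iff' measurableSet_Ioo).mpr ?_
    refine Eventually.of_forall (fun t ht => ?_)
    have h1 : Real.sqrt t ≤ r := by
      have := Real.sqrt_le_sqrt ht.2.le
      rwa [hT, Real.sqrt_sq hrpos.le] at this
    have : 2*(n:ℝ)*Real.sqrt t ≤ 2*n*r := by nlinarith
    rw [hr] at this
    have h2 : 2*(n:ℝ)*(1/(4*n)) = 1/2 := by field_simp; ring
    simp only [Pi.zero_apply]; linarith [h2 ▸ this]
  have hval : ∫ t in Ioo (0:ℝ) T, (1/2 - 2*n*Real.sqrt t) = 1 / (96 * (n:ℝ)^2) := by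
    rw [← MeasureTheory.integral_Ioc_eq_integral_Ioo,
        ← intervalIntegral.integral_of_le hTpos.le]
    simp_rw [Real.sqrt_eq_rpow]
    rw [intervalIntegral.integral_sub intervalIntegrable_const
        (((intervalIntegral.intervalIntegrable_rpow (by norm_num)).const_mul _))]
    rw [intervalIntegral.integral_const, intervalIntegral.integral_const_mul,
        integral_rpow (Or.inl (by norm_num))]
    have h0 : (0:ℝ) ^ ((1:ℝ)/2 + 1) = 0 := by
      rw [Real.zero_rpow]; norm_num
    have hT32 : T ^ ((1:ℝ)/2 + 1) = r ^ (3:ℕ) := by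
      rw [hT, ← Real.rpow_natCast r 2, ← Real.rpow_mul hrpos.le, ← Real.rpow_natCast r 3]
      norm_num
    rw [h0, hT32]
    rw [hT, hr]
    have hne : (n:ℝ) ≠ 0 := ne_of_gt hnR
    field_simp
    ring_nf
    rw [← mul_pow, mul_inv_cancel₀ hne]; norm_num
  have step2 : ENNReal.ofReal (1 / (96 * (n:ℝ)^2)) ≤ ∫⁻ x, ENNReal.ofReal (Ffun γ x) ∂μ := by
    rw [← hval, MeasureTheory.ofReal_integral_eq_lintegral_ofReal hg_int hg_nn]
    exact step1
  have hint : Integrable (Ffun γ) μ := hc.integrableOn_Icc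
  have hfin : ∫⁻ x, ENNReal.ofReal (Ffun γ x) ∂μ ≠ ⊤ := hint.lintegral_lt_top.ne
  have := ENNReal.toReal_mono hfin step2
  rwa [ENNReal.toReal_ofReal (by positivity),
    ← integral_eq_lintegral_of_nonneg_ae (Eventually.of_forall (fun x => Ffun_nonneg γ x))
      hc.aestronglyMeasurable] at this

noncomputable def γup (m : ℕ) : Finset ℝ :=
  ((Finset.range m).image (fun i : ℕ => (2*(i:ℝ)+1)/(4*(m:ℝ)))) ∪ {2/3, 5/6, 1}

lemma γup_nonempty (m : ℕ) : (γup m).Nonempty :=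
  ⟨1, Finset.mem_union_right _ (by simp)⟩

lemma γup_card (m : ℕ) : (γup m).card ≤ m + 3 := by
  refine le_trans (Finset.card_union_le _ _) ?_
  have h1 : ((Finset.range m).image (fun i : ℕ => (2*(i:ℝ)+1)/(4*(m:ℝ)))).card ≤ m :=
    le_trans Finset.card_image_le (by simp)
  have h2 : ({(2:ℝ)/3, 5/6, 1} : Finset ℝ).card ≤ 3 := by
    refine le_trans (Finset.card_insert_le _ _) ?_
    exact Nat.succ_le_succ (le_trans (Finset.card_insert_le _ _) (by simp))
  omega

lemma Ffun_atom {γ : Finset ℝ} {c : ℝ} (hc : c ∈ γ) : Ffun γ c = 0 :=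
  le_antisymm (by simpa using Ffun_le hc c) (Ffun_nonneg γ c)

lemma upper_core {m : ℕ} (hm : 1 ≤ m) :
    ∫ x in Icc (0:ℝ) (1/2), Ffun (γup m) x ≤ 1 / (96 * (m:ℝ)^2) := by
  have hmR : (0:ℝ) < m := by exact_mod_cast hm
  have hc : Continuous (Ffun (γup m)) := Ffun_continuous (γup_nonempty m)
  set a : ℕ → ℝ := fun i => i / (2*m) with ha
  have ha0 : a 0 = 0 := by simp [ha]
  have ham : a m = 1/2 := by rw [ha]; field_simp
  have hmono : ∀ i, a i ≤ a (i+1) := by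
    intro i
    apply div_le_div_of_nonneg_right ?_ (by positivity)
    · exact_mod_cast Nat.le_succ i
  have hint : ∀ k, IntervalIntegrable (Ffun (γup m)) volume (a k) (a (k+1)) :=
    fun k => hc.intervalIntegrable _ _
  have hsum := intervalIntegral.sum_integral_adjacent_intervals
    (a := a) (n := m) (fun k _ => hint k)
  have hIcc : ∫ x in Icc (0:ℝ) (1/2), Ffun (γup m) x
      = ∫ x in (0:ℝ)..(1/2), Ffun (γup m) x := by
    rw [intervalIntegral.integral_of_le (by norm_num), integral_Icc_eq_integral_Ioc]
  rw [hIcc, ← ha0, ← ham, ← hsum]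
  have hbound : ∀ i, i < m → ∫ x in a i..a (i+1), Ffun (γup m) x ≤ 1/(96*(m:ℝ)^3) := by
    intro i him
    set c : ℝ := (2*(i:ℝ)+1)/(4*m) with hcdef
    have hcmem : c ∈ γup m :=
      Finset.mem_union_left _ (Finset.mem_image_of_mem _ (Finset.mem_range.mpr him))
    have h1 : ∫ x in a i..a (i+1), Ffun (γup m) x ≤ ∫ x in a i..a (i+1), (x - c)^2 := by
      apply intervalIntegral.integral_mono_on (hmono i) (hint i)
      · exact (continuous_id.sub continuous_const |>.pow 2).intervalIntegrable _ _
      · exact fun x _ => Ffun_le hcmem x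
    have h2 : ∫ x in a i..a (i+1), (x - c)^2 = 1/(96*(m:ℝ)^3) := by
      rw [intervalIntegral.integral_comp_sub_right (fun x => x^2) c, integral_pow]
      have e1 : a (i+1) - c = 1/(4*m) := by
        rw [ha, hcdef]; push_cast; field_simp; ring
      have e2 : a i - c = -(1/(4*m)) := by
        rw [ha, hcdef]; push_cast; field_simp; ring
      rw [e1, e2]
      field_simp
      ring_nf
      rw [← mul_pow, mul_inv_cancel₀ hmR.ne']; norm_num
    linarith
  calc ∑ i ∈ Finset.range m, ∫ x in a i..a (i+1), Ffun (γup m) x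
      ≤ ∑ i ∈ Finset.range m, 1/(96*(m:ℝ)^3) :=
        Finset.sum_le_sum (fun i hi => hbound i (Finset.mem_range.mp hi))
    _ = 1 / (96 * (m:ℝ)^2) := by
        rw [Finset.sum_const, Finset.card_range, nsmul_eq_mul]
        field_simp

lemma integral_Icc_nonneg (γ : Finset ℝ) : 0 ≤ ∫ x in Icc (0:ℝ) (1/2), Ffun γ x :=
  integral_nonneg fun x => Ffun_nonneg γ x

section Bounds
variable (P : Measure ℝ)

lemma quantErr_set_bddBelow (hP : P = mix (unif 0 (1/2)) discD) (n : ℕ) :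
    BddBelow {v : ℝ | ∃ γ : Finset ℝ, γ.Nonempty ∧ γ.card ≤ n ∧ v = distortion P γ} := by
  refine ⟨0, fun v hv => ?_⟩
  obtain ⟨γ, hγ, -, rfl⟩ := hv
  rw [distortion_eq P hP hγ]
  have h1 := integral_Icc_nonneg γ
  have h2 := Ffun_nonneg γ (2/3); have h3 := Ffun_nonneg γ (5/6); have h4 := Ffun_nonneg γ 1
  linarith

lemma quantErr_ge (hP : P = mix (unif 0 (1/2)) discD) {n : ℕ} (hn : 1 ≤ n) : 1 / (96 * (n:ℝ)^2) ≤ quantErr P n := by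
  refine le_csInf ⟨distortion P {0}, {0}, Finset.singleton_nonempty 0, by simpa, rfl⟩ ?_
  rintro v ⟨γ, hγ, hcard, rfl⟩
  rw [distortion_eq P hP hγ]
  have h1 := lower_core hγ hn hcard
  have h2 := Ffun_nonneg γ (2/3); have h3 := Ffun_nonneg γ (5/6); have h4 := Ffun_nonneg γ 1
  linarith

lemma quantErr_le (hP : P = mix (unif 0 (1/2)) discD) {m : ℕ} (hm : 1 ≤ m) : quantErr P (m + 3) ≤ 1 / (96 * (m:ℝ)^2) := by
  have hmem : distortion P (γup m) ∈
      {v : ℝ | ∃ γ : Finset ℝ, γ.Nonempty ∧ γ.card ≤ m + 3 ∧ v = distortion P γ} :=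
    ⟨γup m, γup_nonempty m, γup_card m, rfl⟩
  refine le_trans (csInf_le (quantErr_set_bddBelow P hP _) hmem) ?_
  rw [distortion_eq P hP (γup_nonempty m)]
  have e1 : Ffun (γup m) (2/3) = 0 := Ffun_atom (Finset.mem_union_right _ (by simp))
  have e2 : Ffun (γup m) (5/6) = 0 := Ffun_atom (Finset.mem_union_right _ (by simp))
  have e3 : Ffun (γup m) 1 = 0 := Ffun_atom (Finset.mem_union_right _ (by simp))
  rw [e1, e2, e3]
  have := upper_core hm
  linarith

end Bounds

theorem stmt6 (P : Measure ℝ) (hP : P = mix (unif 0 (1/2)) discD) :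
    Tendsto (fun n : ℕ => (n : ℝ) ^ 2 * quantErr P n) atTop (nhds (1/96)) ∧
    Tendsto (fun n : ℕ => 2 * Real.log n / (- Real.log (quantErr P n))) atTop (nhds 1) := by
  set V : ℕ → ℝ := fun n => quantErr P n with hV
  have hlow : ∀ n : ℕ, 4 ≤ n → 1 / (96 * (n:ℝ)^2) ≤ V n :=
    fun n hn => quantErr_ge P hP (by omega)
  have hupp : ∀ n : ℕ, 4 ≤ n → V n ≤ 1 / (96 * ((n:ℝ) - 3)^2) := by
    intro n hn
    have h3n : (3:ℕ) ≤ n := by omega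
    have heq : (n - 3 : ℕ) + 3 = n := by omega
    have hcast : ((n - 3 : ℕ) : ℝ) = (n:ℝ) - 3 := by
      push_cast [Nat.cast_sub h3n]; ring
    have := quantErr_le P hP (m := n - 3) (by omega)
    rw [heq, hcast] at this
    exact this
  -- first limit
  have hA : Tendsto (fun n : ℕ => (n : ℝ) ^ 2 * V n) atTop (nhds (1/96)) := by
    have hub : Tendsto (fun n : ℕ => (n:ℝ)^2 * (1 / (96 * ((n:ℝ) - 3)^2)))
        atTop (nhds (1/96)) := by
      have hratio : Tendsto (fun n : ℕ => (n:ℝ) / ((n:ℝ) - 3)) atTop (nhds 1) := by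
        have hden : Tendsto (fun n : ℕ => (n:ℝ) - 3) atTop atTop :=
          tendsto_atTop_add_const_right atTop (-3) tendsto_natCast_atTop_atTop
        have h0 : Tendsto (fun n : ℕ => 3 / ((n:ℝ) - 3)) atTop (nhds 0) :=
          tendsto_const_nhds.div_atTop hden
        have h1 : Tendsto (fun n : ℕ => 1 + 3 / ((n:ℝ) - 3)) atTop (nhds 1) := by
          simpa using tendsto_const_nhds.add h0
        refine h1.congr' ?_
        filter_upwards [eventually_ge_atTop 4] with n hn
        have : (n:ℝ) - 3 ≠ 0 := by
          have : (4:ℝ) ≤ n := by exact_mod_cast hn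
          intro h; nlinarith
        field_simp
        ring
      have := ((hratio.pow 2).const_mul (1/96 : ℝ))
      simp only [one_pow, mul_one] at this
      refine this.congr' ?_
      filter_upwards [eventually_ge_atTop 4] with n hn
      have hne : (n:ℝ) - 3 ≠ 0 := by
        have : (4:ℝ) ≤ n := by exact_mod_cast hn
        intro h; nlinarith
      field_simp
    refine tendsto_of_tendsto_of_tendsto_of_le_of_le' tendsto_const_nhds hub ?_ ?_
    · filter_upwards [eventually_ge_atTop 4] with n hn
      have h := hlow n hn
      have hn2 : (0:ℝ) < (n:ℝ)^2 := by positivity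
      calc (1:ℝ)/96 = (n:ℝ)^2 * (1 / (96 * (n:ℝ)^2)) := by field_simp
        _ ≤ (n:ℝ)^2 * V n := by nlinarith
    · filter_upwards [eventually_ge_atTop 4] with n hn
      have h := hupp n hn
      have hn2 : (0:ℝ) ≤ (n:ℝ)^2 := by positivity
      nlinarith
  refine ⟨hA, ?_⟩
  -- second limit
  have hVpos : ∀ n : ℕ, 4 ≤ n → 0 < V n := by
    intro n hn
    refine lt_of_lt_of_le ?_ (hlow n hn)
    have : (0:ℝ) < (n:ℝ) := by positivity
    positivity
  set u : ℕ → ℝ := fun n => 2 * Real.log n with hu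
  set c : ℕ → ℝ := fun n => Real.log ((n:ℝ)^2 * V n) with hcdef
  have huT : Tendsto u atTop atTop := by
    have := Real.tendsto_log_atTop.comp tendsto_natCast_atTop_atTop
    exact Tendsto.const_mul_atTop (by norm_num) this
  have hcT : Tendsto c atTop (nhds (Real.log (1/96))) :=
    ((Real.continuousAt_log (by norm_num)).tendsto).comp hA
  have hq : Tendsto (fun n => c n / u n) atTop (nhds 0) := hcT.div_atTop huT
  have hmain : Tendsto (fun n => (1 - c n / u n)⁻¹) atTop (nhds 1) := by
    have := (tendsto_const_nhds.sub hq).inv₀ (by norm_num : (1:ℝ) - 0 ≠ 0)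
    simpa using this
  refine hmain.congr' ?_
  filter_upwards [eventually_ge_atTop 4,
    huT.eventually_ge_atTop (|Real.log (1/96)| + 2),
    hcT.eventually_lt_const (lt_add_one (Real.log (1/96)))] with n hn4 hun hcn
  have hVp := hVpos n hn4
  have hnR : (0:ℝ) < (n:ℝ) := by
    have : (4:ℝ) ≤ (n:ℝ) := by exact_mod_cast hn4
    linarith
  have hupos : 0 < u n := lt_of_lt_of_le (by positivity) hun
  have hcu : c n < u n := by
    have h1 : Real.log (1/96) + 1 ≤ |Real.log (1/96)| + 2 := by
      have := le_abs_self (Real.log (1/96)); linarith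
    linarith
  have hce : c n = u n + Real.log (V n) := by
    simp only [hcdef, hu]
    rw [Real.log_mul (by positivity) (ne_of_gt hVp), Real.log_pow]
    push_cast; ring
  have huc : u n - c n = - Real.log (V n) := by rw [hce]; ring
  have hune : u n ≠ 0 := ne_of_gt hupos
  rw [one_sub_div hune, inv_div, huc]
end

section
/- Let P = (1/2)P₁ + (1/2)P₂ where P₁ is uniform on [0,1] and P₂ = δ_{1/2} is the Dirac measure at 1/2. Then P has two different optimal sets of two-means: {(3√5 − 5)/4, (1 + √5)/4} and {(3 − √5)/4, 3(3 − √5)/4}, both yielding the same quantization error V₂(P). In particular, optimal sets of n-means for mixed distributions need not be unique. -/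
open MeasureTheory Set Filter Real
open scoped ENNReal

/-! ### Auxiliary lemmas -/

private lemma s5_lb : (2:ℝ) < Real.sqrt 5 := by
  nlinarith [Real.sq_sqrt (by norm_num : (0:ℝ) ≤ 5), Real.sqrt_nonneg 5]

private lemma s5_ub : Real.sqrt 5 < 9/4 := by
  nlinarith [Real.sq_sqrt (by norm_num : (0:ℝ) ≤ 5), Real.sqrt_nonneg 5]

private lemma s5_sq : Real.sqrt 5 ^ 2 = 5 := Real.sq_sqrt (by norm_num)

private lemma key_int (c s t : ℝ) : (∫ x in s..t, (x - c)^2) = ((t-c)^3 - (s-c)^3)/3 := by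
  have h : ∀ x ∈ uIcc s t, HasDerivAt (fun y : ℝ => (y - c)^3/3) ((x - c)^2) x := by
    intro x _
    have := (((hasDerivAt_id x).sub_const c).pow 3).div_const 3
    exact this.congr_deriv (by simp)
  rw [intervalIntegral.integral_eq_sub_of_hasDerivAt h
    (((continuous_id.sub continuous_const).pow 2).intervalIntegrable s t)]
  ring

private lemma integral_min_pair (a b : ℝ) (h0 : 0 ≤ a) (hab : a ≤ b) (hb : b ≤ 1) :
    ∫ x in Icc (0:ℝ) 1, min ((x-a)^2) ((x-b)^2) = (a^3 + (b-a)^3/4 + (1-b)^3)/3 := by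
  set m := (a+b)/2 with hm
  have hm0 : 0 ≤ m := by simp only [hm]; linarith
  have hm1 : m ≤ 1 := by simp only [hm]; linarith
  have hcont : Continuous fun x : ℝ => min ((x-a)^2) ((x-b)^2) :=
    ((continuous_id.sub continuous_const).pow 2).min ((continuous_id.sub continuous_const).pow 2)
  rw [integral_Icc_eq_integral_Ioc, ← intervalIntegral.integral_of_le (by norm_num : (0:ℝ) ≤ 1)]
  have hsplit : ∫ x in (0:ℝ)..1, min ((x-a)^2) ((x-b)^2)
      = (∫ x in (0:ℝ)..m, min ((x-a)^2) ((x-b)^2)) + ∫ x in m..1, min ((x-a)^2) ((x-b)^2) :=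
    (intervalIntegral.integral_add_adjacent_intervals
      (hcont.intervalIntegrable 0 m) (hcont.intervalIntegrable m 1)).symm
  have h1 : ∫ x in (0:ℝ)..m, min ((x-a)^2) ((x-b)^2) = ∫ x in (0:ℝ)..m, (x-a)^2 := by
    apply intervalIntegral.integral_congr
    intro x hx
    rw [uIcc_of_le hm0] at hx
    have h : (x-a)^2 ≤ (x-b)^2 := by nlinarith [hx.1, hx.2]
    exact min_eq_left h
  have h2 : ∫ x in m..1, min ((x-a)^2) ((x-b)^2) = ∫ x in m..1, (x-b)^2 := by
    apply intervalIntegral.integral_congr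
    intro x hx
    rw [uIcc_of_le hm1] at hx
    have h : (x-b)^2 ≤ (x-a)^2 := by nlinarith [hx.1, hx.2]
    exact min_eq_right h
  rw [hsplit, h1, h2, key_int, key_int]
  ring

private lemma iInf_pair' (a b x : ℝ) :
    (⨅ c : ({a, b} : Finset ℝ), (x - (c : ℝ)) ^ 2) = min ((x-a)^2) ((x-b)^2) := by
  have : Set.range (fun c : ({a, b} : Finset ℝ) => (x - (c : ℝ)) ^ 2)
      = {(x-a)^2, (x-b)^2} := by
    ext y
    constructor
    · rintro ⟨⟨c, hc⟩, rfl⟩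
      simp only [Finset.mem_insert, Finset.mem_singleton] at hc
      rcases hc with rfl | rfl
      · exact Or.inl rfl
      · exact Or.inr rfl
    · rintro (rfl | rfl)
      · exact ⟨⟨a, by simp⟩, rfl⟩
      · exact ⟨⟨b, by simp⟩, rfl⟩
  rw [iInf, this, csInf_pair]

private lemma distortion_pair (a b : ℝ) :
    distortion (mix (unif 0 1) (Measure.dirac (1/2))) {a, b}
      = (∫ x in Icc (0:ℝ) 1, min ((x-a)^2) ((x-b)^2))/2
        + (min ((1/2-a)^2) ((1/2-b)^2))/2 := by
  have hunif : unif 0 1 = volume.restrict (Icc (0:ℝ) 1) := by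
    simp [unif]
  have hcont : Continuous fun x : ℝ => min ((x-a)^2) ((x-b)^2) :=
    ((continuous_id.sub continuous_const).pow 2).min ((continuous_id.sub continuous_const).pow 2)
  have hint1 : Integrable (fun x : ℝ => min ((x-a)^2) ((x-b)^2))
      ((2:ℝ≥0∞)⁻¹ • volume.restrict (Icc (0:ℝ) 1)) :=
    Integrable.smul_measure hcont.integrableOn_Icc (by norm_num)
  have hint2 : Integrable (fun x : ℝ => min ((x-a)^2) ((x-b)^2))
      ((2:ℝ≥0∞)⁻¹ • Measure.dirac (1/2 : ℝ)) :=
    Integrable.smul_measure ((integrable_const _).congr (ae_eq_dirac _).symm) (by norm_num)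
  rw [distortion]
  simp only [iInf_pair']
  rw [mix, hunif, integral_add_measure hint1 hint2, integral_smul_measure,
    integral_smul_measure, integral_dirac]
  norm_num
  ring

/-- Main two-point inequality (atom assigned to the left point). -/
private lemma ineq1 (a b : ℝ) (ha : 0 ≤ a) (hab : a ≤ b) (hb : b ≤ 1) :
    (34 - 15 * Real.sqrt 5)/24 ≤ (a^3 + (b-a)^3/4 + (1-b)^3)/6 + (1/2 - a)^2/2 := by
  set s := Real.sqrt 5 with hs
  have h5 : s^2 = 5 := s5_sq
  have h2 : (2:ℝ) < s := s5_lb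
  have h3 : s < 9/4 := s5_ub
  nlinarith [mul_nonneg ha (sq_nonneg (a - (3*s-5)/4)),
    mul_nonneg (by linarith : (0:ℝ) ≤ 1-b) (sq_nonneg (b - (1+s)/4)),
    mul_nonneg (by linarith : (0:ℝ) ≤ b-a) (sq_nonneg ((b-a) - (3-s)/2)),
    sq_nonneg (a - (3*s-5)/4), sq_nonneg (b - (1+s)/4),
    sq_nonneg ((a - (3*s-5)/4) - (b - (1+s)/4)),
    sq_nonneg ((a - (3*s-5)/4) + (b - (1+s)/4))]

/-- Main two-point inequality (atom assigned to the right point), by reflection. -/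
private lemma ineq2 (a b : ℝ) (ha : 0 ≤ a) (hab : a ≤ b) (hb : b ≤ 1) :
    (34 - 15 * Real.sqrt 5)/24 ≤ (a^3 + (b-a)^3/4 + (1-b)^3)/6 + (1/2 - b)^2/2 := by
  have := ineq1 (1-b) (1-a) (by linarith) (by linarith) (by linarith)
  nlinarith [this]

/-- Lower bound for the distortion of any pair. -/
private lemma LB_pair (a b : ℝ) (hab : a ≤ b) :
    (34 - 15 * Real.sqrt 5)/24
      ≤ distortion (mix (unif 0 1) (Measure.dirac (1/2))) {a, b} := by
  set a' := max 0 (min 1 a) with ha'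
  set b' := max 0 (min 1 b) with hb'
  have ha'0 : 0 ≤ a' := le_max_left _ _
  have hb'0 : 0 ≤ b' := le_max_left _ _
  have ha'1 : a' ≤ 1 := max_le (by norm_num) (min_le_left _ _)
  have hb'1 : b' ≤ 1 := max_le (by norm_num) (min_le_left _ _)
  have hab' : a' ≤ b' := max_le_max le_rfl (min_le_min le_rfl hab)
  have clamp_le : ∀ x c : ℝ, 0 ≤ x → x ≤ 1 → (x - max 0 (min 1 c))^2 ≤ (x - c)^2 := by
    intro x c hx0 hx1
    rcases le_total c 0 with h | h
    · rw [min_eq_right (by linarith), max_eq_left (by linarith)]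
      nlinarith
    · rcases le_total c 1 with h1 | h1
      · rw [min_eq_right h1, max_eq_right h]
      · rw [min_eq_left h1, max_eq_right (by norm_num)]
        nlinarith
  have hpt : ∀ x : ℝ, 0 ≤ x → x ≤ 1 →
      min ((x-a')^2) ((x-b')^2) ≤ min ((x-a)^2) ((x-b)^2) :=
    fun x hx0 hx1 => min_le_min (clamp_le x a hx0 hx1) (clamp_le x b hx0 hx1)
  have hcont : ∀ u v : ℝ, Continuous fun x : ℝ => min ((x-u)^2) ((x-v)^2) := fun u v =>
    ((continuous_id.sub continuous_const).pow 2).min ((continuous_id.sub continuous_const).pow 2)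
  have hintmono : (∫ x in Icc (0:ℝ) 1, min ((x-a')^2) ((x-b')^2))
      ≤ ∫ x in Icc (0:ℝ) 1, min ((x-a)^2) ((x-b)^2) := by
    refine setIntegral_mono_on ((hcont a' b').integrableOn_Icc)
      ((hcont a b).integrableOn_Icc) measurableSet_Icc ?_
    intro x hx
    exact hpt x hx.1 hx.2
  have hptd : min ((1/2-a')^2) ((1/2-b')^2) ≤ min ((1/2-a)^2) ((1/2-b)^2) := by
    have := hpt (1/2) (by norm_num) (by norm_num)
    have e1 : ((1:ℝ)/2 - a')^2 = (1/2 - a')^2 := rfl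
    simpa using this
  rw [distortion_pair]
  have hval := integral_min_pair a' b' ha'0 hab' hb'1
  have hmain : (34 - 15 * Real.sqrt 5)/24
      ≤ (∫ x in Icc (0:ℝ) 1, min ((x-a')^2) ((x-b')^2))/2
        + (min ((1/2-a')^2) ((1/2-b')^2))/2 := by
    rw [hval]
    rcases min_cases ((1/2-a')^2) ((1/2-b')^2) with ⟨heq, _⟩ | ⟨heq, _⟩
    · rw [heq]
      have := ineq1 a' b' ha'0 hab' hb'1
      linarith
    · rw [heq]
      have := ineq2 a' b' ha'0 hab' hb'1
      linarith
  linarith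

/-- The claimed quantization error value. -/
private lemma distortion_set1 :
    distortion (mix (unif 0 1) (Measure.dirac (1/2)))
      {(3 * Real.sqrt 5 - 5) / 4, (1 + Real.sqrt 5) / 4}
      = (34 - 15 * Real.sqrt 5)/24 := by
  set s := Real.sqrt 5 with hs
  have h5 : s^2 = 5 := s5_sq
  have h2 : (2:ℝ) < s := s5_lb
  have h3 : s < 9/4 := s5_ub
  rw [distortion_pair, integral_min_pair _ _ (by nlinarith) (by nlinarith) (by nlinarith),
    min_eq_left (by nlinarith)]
  linear_combination (s/16) * h5

private lemma distortion_set2 :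
    distortion (mix (unif 0 1) (Measure.dirac (1/2)))
      {(3 - Real.sqrt 5) / 4, 3 * (3 - Real.sqrt 5) / 4}
      = (34 - 15 * Real.sqrt 5)/24 := by
  set s := Real.sqrt 5 with hs
  have h5 : s^2 = 5 := s5_sq
  have h2 : (2:ℝ) < s := s5_lb
  have h3 : s < 9/4 := s5_ub
  rw [distortion_pair, integral_min_pair _ _ (by nlinarith) (by nlinarith) (by nlinarith),
    min_eq_right (by nlinarith)]
  linear_combination (s/16) * h5

theorem stmt8 (P : Measure ℝ) (hP : P = mix (unif 0 1) (Measure.dirac (1/2))) :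
    IsOptimalSet P 2 ({(3 * Real.sqrt 5 - 5) / 4, (1 + Real.sqrt 5) / 4} : Finset ℝ) ∧
    IsOptimalSet P 2
      ({(3 - Real.sqrt 5) / 4, 3 * (3 - Real.sqrt 5) / 4} : Finset ℝ) ∧
    ({(3 * Real.sqrt 5 - 5) / 4, (1 + Real.sqrt 5) / 4} : Finset ℝ) ≠
      ({(3 - Real.sqrt 5) / 4, 3 * (3 - Real.sqrt 5) / 4} : Finset ℝ) := by
  subst hP
  set s := Real.sqrt 5 with hs
  have h5 : s^2 = 5 := s5_sq
  have h2 : (2:ℝ) < s := s5_lb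
  have h3 : s < 9/4 := s5_ub
  set V : ℝ := (34 - 15 * s)/24 with hV
  -- lower bound for all admissible sets
  have hLB : ∀ v ∈ {v : ℝ | ∃ γ : Finset ℝ, γ.Nonempty ∧ γ.card ≤ 2
      ∧ v = distortion (mix (unif 0 1) (Measure.dirac (1/2))) γ}, V ≤ v := by
    rintro v ⟨γ, hne, hcard, rfl⟩
    have h1le : 1 ≤ γ.card := Finset.card_pos.mpr hne
    interval_cases h : γ.card
    · obtain ⟨c, rfl⟩ := Finset.card_eq_one.mp h
      have hcc : ({c, c} : Finset ℝ) = {c} := by simp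
      rw [← hcc]
      exact LB_pair c c le_rfl
    · obtain ⟨a, b, hab, rfl⟩ := Finset.card_eq_two.mp h
      rcases le_total a b with hle | hle
      · exact LB_pair a b hle
      · rw [Finset.pair_comm]
        exact LB_pair b a hle
  -- the value V is attained
  have hmem : V ∈ {v : ℝ | ∃ γ : Finset ℝ, γ.Nonempty ∧ γ.card ≤ 2
      ∧ v = distortion (mix (unif 0 1) (Measure.dirac (1/2))) γ} := by
    exact ⟨{(3*s-5)/4, (1+s)/4}, Finset.insert_nonempty _ _,
      (Finset.card_insert_le _ _).trans (by simp), distortion_set1.symm⟩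
  have hq : quantErr (mix (unif 0 1) (Measure.dirac (1/2))) 2 = V := by
    rw [quantErr]
    exact le_antisymm (csInf_le ⟨V, fun v hv => hLB v hv⟩ hmem) (le_csInf ⟨V, hmem⟩ hLB)
  refine ⟨⟨Finset.insert_nonempty _ _, (Finset.card_insert_le _ _).trans (by simp), ?_⟩,
    ⟨Finset.insert_nonempty _ _, (Finset.card_insert_le _ _).trans (by simp), ?_⟩, ?_⟩
  · rw [hq, distortion_set1]
  · rw [hq, distortion_set2]
  · intro hcontra
    have hmem1 : (3*s-5)/4 ∈ ({(3-s)/4, 3*(3-s)/4} : Finset ℝ) := by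
      rw [← hcontra]; exact Finset.mem_insert_self _ _
    simp only [Finset.mem_insert, Finset.mem_singleton] at hmem1
    rcases hmem1 with h | h
    · nlinarith
    · nlinarith
end
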